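/- arXiv:1803.07884 — 2 statements merged into one kernel-verified Lean document; each statement's English description precedes it below -/
import Mathlib

section
/- Reduction of modelled distributions: Let (A,T) be an abstract space with skeleton Γ and let V ∈ D^ᾱ(T;Γ). For every η with β̲ < η ≤ β̄: C_ηV ∈ D^{ᾱ∧η}(T;Γ), with ‖C_ηV‖_{T;Γ} ≤ ‖V‖_{T;Γ} and [C_ηV]_{D^{ᾱ∧η}(T;Γ)} ≤ [V]_{D^ᾱ(T;Γ)} + (|A|−1) N^{m(η)} ‖Γ‖_sk ‖V‖_{T;Γ}, where m(η) := min{⟨β⟩ : β ∈ A, β ≥ η}. Moreover, for every κ > η, every x ∈ ℝ² and every v ∈ T: |(C_κ − C_η)V(x).v| ≤ ‖V‖_{T;Γ} Σ_{β∈A, η≤β<κ} N^{⟨β⟩} ‖Γ_β(x)v‖_{T_β}, and |(id − C_η)V(x).v| ≤ ‖V‖_{T;Γ} Σ_{β∈A, β≥η} N^{⟨β⟩} ‖Γ_β(x)v‖_{T_β}. -/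
open scoped BigOperators
open MeasureTheory

noncomputable section

/-- The parabolic metric `d(x,y) = |x₁−y₁| + √|x₂−y₂|` on `ℝ²`. -/
def pdist (x y : ℝ × ℝ) : ℝ := |x.1 - y.1| + Real.sqrt |x.2 - y.2|

/-- The kernel `ψ_T`, the inverse Fourier transform of `exp(−T(k₁⁴+k₂²))`. -/
def psiK (T : ℝ) (x : ℝ × ℝ) : ℝ :=
  ∫ k : ℝ × ℝ, Real.exp (-(T * (k.1 ^ 4 + k.2 ^ 2))) *
    Real.cos (2 * Real.pi * (k.1 * x.1 + k.2 * x.2))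

/-- Mollification at scale `t` by convolution with `ψ_t`. -/
def mollify {E : Type*} [NormedAddCommGroup E] [NormedSpace ℝ E]
    (t : ℝ) (g : ℝ × ℝ → E) (x : ℝ × ℝ) : E :=
  ∫ y : ℝ × ℝ, psiK t (x - y) • g y

/-- A (vector valued) tempered distribution represented through its semigroup
mollifications `g_T`, with the semigroup property `(g_T)_t = g_{T+t}`. -/
structure MollDistrib (E : Type*) [NormedAddCommGroup E] [NormedSpace ℝ E] where
  app : ℝ → ℝ × ℝ → E
  cont : ∀ T : ℝ, 0 < T → Continuous (app T)
  semigroup : ∀ T : ℝ, 0 < T → ∀ t : ℝ, 0 < t → app (T + t) = mollify t (app T)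

/-- The data of a skeleton on the abstract space `(A, T = ⊕_{β∈A} T_β)`:
a triangular, strongly continuous family of operators. -/
structure PreSkeleton (A : Finset ℝ) (Tb : A → Type*)
    [∀ β, NormedAddCommGroup (Tb β)] [∀ β, NormedSpace ℝ (Tb β)] where
  mat : ℝ × ℝ → ∀ β γ : A, Tb γ →L[ℝ] Tb β
  cont : ∀ (β γ : A) (v : Tb γ), Continuous fun x => mat x β γ v
  diag : ∀ (x : ℝ × ℝ) (β : A), mat x β β = ContinuousLinearMap.id ℝ (Tb β)
  upper : ∀ (x : ℝ × ℝ) (β γ : A), (β : ℝ) < (γ : ℝ) → mat x β γ = 0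

namespace PreSkeleton

variable {A : Finset ℝ} {Tb : A → Type*}
  [∀ β, NormedAddCommGroup (Tb β)] [∀ β, NormedSpace ℝ (Tb β)]

/-- `Γ_β(x)v = v_β + ∑_{γ<β} Γ_β^γ(x) v_γ`. -/
def apply (S : PreSkeleton A Tb) (x : ℝ × ℝ) (β : A) (v : ∀ γ : A, Tb γ) : Tb β :=
  ∑ γ : A, S.mat x β γ (v γ)

/-- The continuity property (ssss2) of a skeleton, with constant `C`. -/
def IsSkelBound (S : PreSkeleton A Tb) (C : ℝ) : Prop :=
  ∀ (β : A) (v : ∀ γ : A, Tb γ) (x y : ℝ × ℝ), pdist y x ≤ 1 →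
    ‖S.apply y β v - S.apply x β v‖ ≤
      C * ∑ γ : A, (if (γ : ℝ) < (β : ℝ)
        then pdist y x ^ ((β : ℝ) - (γ : ℝ)) * ‖S.apply x γ v‖ else 0)

/-- `Γ` is a skeleton: the continuity property holds for some `C ≥ 0`. -/
def IsSkeleton (S : PreSkeleton A Tb) : Prop := ∃ C, 0 ≤ C ∧ S.IsSkelBound C

/-- `‖Γ‖_sk`, the least admissible constant in the continuity property. -/
def skelNorm (S : PreSkeleton A Tb) : ℝ := sInf {C | 0 ≤ C ∧ S.IsSkelBound C}

/-- Form boundedness of `V : ℝ² → T*` with constants `(M_β^b)`. -/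
def FormBounded (S : PreSkeleton A Tb) (V : ℝ × ℝ → (∀ γ : A, Tb γ) → ℝ)
    (Mb : A → ℝ) : Prop :=
  ∀ x v, |V x v| ≤ ∑ β : A, Mb β * ‖S.apply x β v‖

/-- Form continuity of order `ord` with constant `Mc`. -/
def FormContinuous (S : PreSkeleton A Tb) (ord : ℝ)
    (V : ℝ × ℝ → (∀ γ : A, Tb γ) → ℝ) (Mc : ℝ) : Prop :=
  ∀ x y v, pdist y x ≤ 1 →
    |V y v - V x v| ≤
      Mc * ∑ β : A, pdist y x ^ max (ord - (β : ℝ)) 0 * ‖S.apply x β v‖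

/-- `V` is a modelled distribution of order `ord` relative to the skeleton `S`. -/
def IsModelled (S : PreSkeleton A Tb) (ord : ℝ)
    (V : ℝ × ℝ → (∀ γ : A, Tb γ) → ℝ) : Prop :=
  (∀ x, IsLinearMap ℝ (V x)) ∧ (∀ v, Continuous fun x => V x v) ∧
    (∃ Mb : A → ℝ, (∀ β, 0 ≤ Mb β) ∧ S.FormBounded V Mb) ∧
    (∃ Mc : ℝ, 0 ≤ Mc ∧ S.FormContinuous ord V Mc)

/-- The seminorm `[V]_{D^{ord}(T;Γ)}`: least form-continuity constant. -/
def ctyNorm (S : PreSkeleton A Tb) (ord : ℝ)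
    (V : ℝ × ℝ → (∀ γ : A, Tb γ) → ℝ) : ℝ :=
  sInf {Mc | 0 ≤ Mc ∧ S.FormContinuous ord V Mc}

/-- The norm `‖V‖_{T;Γ}`: least `M` such that the constants `M·N^{⟨β⟩}` are
admissible for form boundedness. -/
def bdNorm (S : PreSkeleton A Tb) (N : ℝ) (exps : A → ℝ)
    (V : ℝ × ℝ → (∀ γ : A, Tb γ) → ℝ) : ℝ :=
  sInf {M | 0 ≤ M ∧ S.FormBounded V fun β => M * N ^ exps β}

/-- One step `(id − Γ_b)` of the reduction procedure. -/
def cutStep (S : PreSkeleton A Tb) (x : ℝ × ℝ) (b : ℝ)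
    (v : ∀ γ : A, Tb γ) : ∀ γ : A, Tb γ :=
  fun γ => v γ - if (γ : ℝ) = b then S.apply x γ v else 0

/-- The reduction of a vector: all levels `≥ η` are cut, in increasing order. -/
def cutVec (S : PreSkeleton A Tb) (x : ℝ × ℝ) (η : ℝ)
    (v : ∀ γ : A, Tb γ) : ∀ γ : A, Tb γ :=
  ((A.filter fun b => η ≤ b).sort (· ≤ ·)).foldl (fun w b => S.cutStep x b w) v

/-- The reduction `C_η V` of a modelled distribution. -/
def cutForm (S : PreSkeleton A Tb) (η : ℝ)
    (V : ℝ × ℝ → (∀ γ : A, Tb γ) → ℝ) : ℝ × ℝ → (∀ γ : A, Tb γ) → ℝ :=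
  fun x v => V x (S.cutVec x η v)

end PreSkeleton


section Helpers

open Filter Topology

lemma pdist_nonneg (x y : ℝ × ℝ) : 0 ≤ pdist x y :=
  add_nonneg (abs_nonneg _) (Real.sqrt_nonneg _)

lemma pdist_comm (x y : ℝ × ℝ) : pdist x y = pdist y x := by
  unfold pdist; rw [abs_sub_comm, abs_sub_comm x.2]

lemma pdist_self (x : ℝ × ℝ) : pdist x x = 0 := by simp [pdist]

lemma pdist_tendsto (x : ℝ × ℝ) :
    Tendsto (fun y => pdist y x) (𝓝 x) (𝓝 0) := by
  have hc : Continuous fun y : ℝ × ℝ => pdist y x := by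
    unfold pdist
    exact ((continuous_fst.sub continuous_const).abs).add
      ((continuous_snd.sub continuous_const).abs).sqrt
  have := hc.tendsto x
  rwa [pdist_self] at this

/-- Antitonicity of `d ^ ·` for `d ∈ [0,1]` and nonnegative exponents. -/
lemma rpow_anti {d a c : ℝ} (hd0 : 0 ≤ d) (hd1 : d ≤ 1) (hc : 0 ≤ c)
    (h : c ≤ a) : d ^ a ≤ d ^ c := by
  rcases hc.eq_or_lt with hc0 | hc0
  · rw [← hc0, Real.rpow_zero]
    exact Real.rpow_le_one hd0 hd1 (by linarith)
  · rcases hd0.eq_or_lt with hd | hd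
    · rw [← hd, Real.zero_rpow (ne_of_gt (lt_of_lt_of_le hc0 h)),
        Real.zero_rpow (ne_of_gt hc0)]
    · exact Real.rpow_le_rpow_of_exponent_ge hd hd1 h

lemma le_csInf_mul {SS : Set ℝ} (hne : SS.Nonempty) {a c : ℝ} (hc : 0 ≤ c)
    (h : ∀ M ∈ SS, a ≤ M * c) : a ≤ sInf SS * c := by
  rcases hc.eq_or_lt with hc0 | hc0
  · obtain ⟨M, hM⟩ := hne
    have := h M hM
    rw [← hc0] at this ⊢
    simpa using this
  · have hdiv : a / c ≤ sInf SS :=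
      le_csInf hne fun M hM => (div_le_iff₀ hc0).mpr (h M hM)
    calc a = a / c * c := (div_mul_cancel₀ a (ne_of_gt hc0)).symm
    _ ≤ sInf SS * c := mul_le_mul_of_nonneg_right hdiv hc
  
end Helpers

namespace PreSkeleton

variable {A : Finset ℝ} {Tb : A → Type*}
  [∀ β, NormedAddCommGroup (Tb β)] [∀ β, NormedSpace ℝ (Tb β)]

lemma apply_add (S : PreSkeleton A Tb) (x : ℝ × ℝ) (β : A)
    (v w : ∀ γ : A, Tb γ) :
    S.apply x β (v + w) = S.apply x β v + S.apply x β w := by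
  simp [apply, Finset.sum_add_distrib]

lemma apply_sub (S : PreSkeleton A Tb) (x : ℝ × ℝ) (β : A)
    (v w : ∀ γ : A, Tb γ) :
    S.apply x β (v - w) = S.apply x β v - S.apply x β w := by
  simp [apply, Finset.sum_sub_distrib]

lemma apply_smul (S : PreSkeleton A Tb) (x : ℝ × ℝ) (β : A) (c : ℝ)
    (v : ∀ γ : A, Tb γ) :
    S.apply x β (c • v) = c • S.apply x β v := by
  simp [apply, Finset.smul_sum]

lemma apply_congr_le (S : PreSkeleton A Tb) (x : ℝ × ℝ) (β : A)
    {v w : ∀ γ : A, Tb γ} (h : ∀ γ : A, (γ : ℝ) ≤ (β : ℝ) → v γ = w γ) :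
    S.apply x β v = S.apply x β w := by
  unfold apply
  refine Finset.sum_congr rfl fun γ _ => ?_
  by_cases hγ : (γ : ℝ) ≤ (β : ℝ)
  · rw [h γ hγ]
  · rw [S.upper x β γ (lt_of_not_ge hγ)]; simp

lemma apply_cutStep_self (S : PreSkeleton A Tb) (x : ℝ × ℝ) (b : ℝ)
    (v : ∀ γ : A, Tb γ) (β : A) (hb : (β : ℝ) = b) :
    S.apply x β (S.cutStep x b v) = 0 := by
  have h1 : S.cutStep x b v
      = v - fun γ : A => if (γ : ℝ) = b then S.apply x γ v else 0 := rfl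
  rw [h1, S.apply_sub]
  have h2 : S.apply x β (fun γ : A => if (γ : ℝ) = b then S.apply x γ v else 0)
      = S.apply x β v := by
    unfold apply
    rw [Finset.sum_eq_single β]
    · simp only [if_pos hb, S.diag]; rfl
    · intro γ _ hγ
      have hne : ¬ ((γ : ℝ) = b) := fun hcon => hγ (Subtype.ext (by rw [hcon, hb]))
      simp only [if_neg hne, map_zero]
    · intro h; exact absurd (Finset.mem_univ β) h
  rw [h2, sub_self]

lemma cutStep_add (S : PreSkeleton A Tb) (x : ℝ × ℝ) (b : ℝ)
    (v w : ∀ γ : A, Tb γ) :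
    S.cutStep x b (v + w) = S.cutStep x b v + S.cutStep x b w := by
  funext γ
  simp only [cutStep, Pi.add_apply, S.apply_add]
  split_ifs <;> abel

lemma cutStep_smul (S : PreSkeleton A Tb) (x : ℝ × ℝ) (b : ℝ) (c : ℝ)
    (v : ∀ γ : A, Tb γ) :
    S.cutStep x b (c • v) = c • S.cutStep x b v := by
  funext γ
  simp only [cutStep, Pi.smul_apply, S.apply_smul]
  split_ifs <;> simp [smul_sub]

lemma foldl_spec (S : PreSkeleton A Tb) (x : ℝ × ℝ) :
    ∀ l : List ℝ, l.Pairwise (· < ·) → ∀ v : ∀ γ : A, Tb γ,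
      (∀ γ : A, (γ : ℝ) ∉ l →
        (l.foldl (fun w b => S.cutStep x b w) v) γ = v γ) ∧
      (∀ β : A, (β : ℝ) ∈ l →
        S.apply x β (l.foldl (fun w b => S.cutStep x b w) v) = 0) := by
  intro l
  induction l with
  | nil =>
    intro _ v
    exact ⟨fun _ _ => rfl, fun β h => absurd h List.not_mem_nil⟩
  | cons b l ih =>
    intro hs v
    obtain ⟨hb, hs'⟩ := List.pairwise_cons.mp hs
    have IH := ih hs' (S.cutStep x b v)
    rw [List.foldl_cons]
    constructor
    · intro γ hγ
      have hγ1 : (γ : ℝ) ≠ b := fun h => hγ (h ▸ List.mem_cons_self)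
      have hγ2 : (γ : ℝ) ∉ l := fun h => hγ (List.mem_cons_of_mem _ h)
      rw [IH.1 γ hγ2]
      simp [cutStep, hγ1]
    · intro β hβ
      rcases List.mem_cons.mp hβ with hβ1 | hβ2
      · have key : S.apply x β (l.foldl (fun w b => S.cutStep x b w)
            (S.cutStep x b v)) = S.apply x β (S.cutStep x b v) := by
          refine S.apply_congr_le x β fun γ hγ => ?_
          refine IH.1 γ fun hmem => ?_
          have := hb _ hmem
          have : (γ : ℝ) ≤ b := hβ1 ▸ hγ
          linarith [hb _ hmem]
        rw [key]
        exact S.apply_cutStep_self x b v β hβ1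
      · exact IH.2 β hβ2

lemma cutVec_comp_of_lt (S : PreSkeleton A Tb) (x : ℝ × ℝ) (η : ℝ)
    (v : ∀ γ : A, Tb γ) (γ : A) (h : (γ : ℝ) < η) :
    S.cutVec x η v γ = v γ := by
  refine (S.foldl_spec x _ (Finset.sortedLT_sort _).pairwise v).1 γ fun hmem => ?_
  have := (Finset.mem_filter.mp ((Finset.mem_sort _).mp hmem)).2
  linarith

lemma apply_cutVec_of_lt (S : PreSkeleton A Tb) (x : ℝ × ℝ) (η : ℝ)
    (v : ∀ γ : A, Tb γ) (β : A) (h : (β : ℝ) < η) :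
    S.apply x β (S.cutVec x η v) = S.apply x β v :=
  S.apply_congr_le x β fun γ hγ =>
    S.cutVec_comp_of_lt x η v γ (lt_of_le_of_lt hγ h)

lemma apply_cutVec_of_le (S : PreSkeleton A Tb) (x : ℝ × ℝ) (η : ℝ)
    (v : ∀ γ : A, Tb γ) (β : A) (h : η ≤ (β : ℝ)) :
    S.apply x β (S.cutVec x η v) = 0 :=
  (S.foldl_spec x _ (Finset.sortedLT_sort _).pairwise v).2 β
    ((Finset.mem_sort _).mpr (Finset.mem_filter.mpr ⟨β.2, h⟩))

lemma apply_congr_pt (S : PreSkeleton A Tb) (x y : ℝ × ℝ) (η : ℝ)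
    (v : ∀ γ : A, Tb γ) (β : A) (h : (β : ℝ) < η) :
    S.apply y β (S.cutVec x η v) = S.apply y β v :=
  S.apply_congr_le y β fun γ hγ =>
    S.cutVec_comp_of_lt x η v γ (lt_of_le_of_lt hγ h)

lemma cutVec_add (S : PreSkeleton A Tb) (x : ℝ × ℝ) (η : ℝ)
    (v w : ∀ γ : A, Tb γ) :
    S.cutVec x η (v + w) = S.cutVec x η v + S.cutVec x η w := by
  unfold cutVec
  generalize ((A.filter fun b => η ≤ b).sort (· ≤ ·)) = l
  induction l generalizing v w with
  | nil => rfl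
  | cons b l ih => rw [List.foldl_cons, List.foldl_cons, List.foldl_cons,
      S.cutStep_add, ih]

lemma cutVec_smul (S : PreSkeleton A Tb) (x : ℝ × ℝ) (η : ℝ) (c : ℝ)
    (v : ∀ γ : A, Tb γ) :
    S.cutVec x η (c • v) = c • S.cutVec x η v := by
  unfold cutVec
  generalize ((A.filter fun b => η ≤ b).sort (· ≤ ·)) = l
  induction l generalizing v with
  | nil => rfl
  | cons b l ih => rw [List.foldl_cons, List.foldl_cons, S.cutStep_smul, ih]

/-- Key estimate: for `β ≥ η` the skeleton applied at a nearby point to a cut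
vector is small. -/
lemma apply_cutVec_remainder (S : PreSkeleton A Tb) {C : ℝ}
    (hC : S.IsSkelBound C) (x y : ℝ × ℝ) (hd : pdist y x ≤ 1) (η : ℝ)
    (v : ∀ γ : A, Tb γ) (β : A) (hβ : η ≤ (β : ℝ)) :
    ‖S.apply y β (S.cutVec x η v)‖ ≤
      C * ∑ γ : A, (if (γ : ℝ) < (β : ℝ) ∧ (γ : ℝ) < η
        then pdist y x ^ ((β : ℝ) - (γ : ℝ)) * ‖S.apply x γ v‖ else 0) := by
  have h0 := S.apply_cutVec_of_le x η v β hβ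
  have h1 : ‖S.apply y β (S.cutVec x η v)‖
      = ‖S.apply y β (S.cutVec x η v) - S.apply x β (S.cutVec x η v)‖ := by
    rw [h0, sub_zero]
  rw [h1]
  refine le_of_le_of_eq (hC β (S.cutVec x η v) x y hd) ?_
  congr 1
  refine Finset.sum_congr rfl fun γ _ => ?_
  by_cases h2 : (γ : ℝ) < (β : ℝ)
  · by_cases h3 : (γ : ℝ) < η
    · rw [if_pos h2, if_pos ⟨h2, h3⟩, S.apply_cutVec_of_lt x η v γ h3]
    · rw [if_pos h2, if_neg (fun hc => h3 hc.2),
        S.apply_cutVec_of_le x η v γ (le_of_not_gt h3)]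
      simp
  · rw [if_neg h2, if_neg (fun hc => h2 hc.1)]

end PreSkeleton


namespace PreSkeleton

variable {A : Finset ℝ} {Tb : A → Type*}
  [∀ β, NormedAddCommGroup (Tb β)] [∀ β, NormedSpace ℝ (Tb β)]

lemma skelNorm_spec (S : PreSkeleton A Tb) (hS : S.IsSkeleton) :
    0 ≤ S.skelNorm ∧ S.IsSkelBound S.skelNorm := by
  obtain ⟨C0, hC00, hC0b⟩ := hS
  have hne : {C | 0 ≤ C ∧ S.IsSkelBound C}.Nonempty := ⟨C0, hC00, hC0b⟩
  refine ⟨le_csInf hne fun C hC => hC.1, ?_⟩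
  intro β v x y hd
  have hc : 0 ≤ ∑ γ : A, (if (γ : ℝ) < (β : ℝ)
      then pdist y x ^ ((β : ℝ) - (γ : ℝ)) * ‖S.apply x γ v‖ else 0) := by
    refine Finset.sum_nonneg fun γ _ => ?_
    split_ifs
    · exact mul_nonneg (Real.rpow_nonneg (pdist_nonneg _ _) _) (norm_nonneg _)
    · exact le_rfl
  exact le_csInf_mul hne hc fun C hC => hC.2 β v x y hd

lemma bdNorm_spec (S : PreSkeleton A Tb) (N : ℝ) (hN0 : 0 < N) (exps : A → ℝ)
    (V : ℝ × ℝ → (∀ γ : A, Tb γ) → ℝ)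
    (hMb : ∃ Mb : A → ℝ, (∀ β, 0 ≤ Mb β) ∧ S.FormBounded V Mb) :
    0 ≤ S.bdNorm N exps V ∧
    S.FormBounded V (fun β => S.bdNorm N exps V * N ^ exps β) ∧
    {M | 0 ≤ M ∧ S.FormBounded V fun β => M * N ^ exps β}.Nonempty := by
  obtain ⟨Mb, hMb0, hMbB⟩ := hMb
  have hne : {M | 0 ≤ M ∧ S.FormBounded V fun β => M * N ^ exps β}.Nonempty := by
    refine ⟨∑ β : A, Mb β * (N ^ exps β)⁻¹, ?_, ?_⟩
    · refine Finset.sum_nonneg fun β _ => mul_nonneg (hMb0 β) ?_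
      exact inv_nonneg.mpr (Real.rpow_nonneg hN0.le _)
    · intro x v
      refine (hMbB x v).trans (Finset.sum_le_sum fun β _ => ?_)
      refine mul_le_mul_of_nonneg_right ?_ (norm_nonneg _)
      have hpos : (0 : ℝ) < N ^ exps β := Real.rpow_pos_of_pos hN0 _
      have h1 : Mb β * (N ^ exps β)⁻¹ ≤ ∑ γ : A, Mb γ * (N ^ exps γ)⁻¹ :=
        Finset.single_le_sum (f := fun γ : A => Mb γ * (N ^ exps γ)⁻¹)
          (fun γ _ => mul_nonneg (hMb0 γ)
            (inv_nonneg.mpr (Real.rpow_nonneg hN0.le _)))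
          (Finset.mem_univ β)
      calc Mb β = Mb β * (N ^ exps β)⁻¹ * N ^ exps β := by
            field_simp
        _ ≤ (∑ γ : A, Mb γ * (N ^ exps γ)⁻¹) * N ^ exps β :=
            mul_le_mul_of_nonneg_right h1 hpos.le
  have hsum : ∀ (M : ℝ) (x : ℝ × ℝ) (v : ∀ γ : A, Tb γ),
      (∑ β : A, (M * N ^ exps β) * ‖S.apply x β v‖)
        = M * ∑ β : A, N ^ exps β * ‖S.apply x β v‖ := by
    intro M x v
    rw [Finset.mul_sum]
    exact Finset.sum_congr rfl fun β _ => by ring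
  refine ⟨le_csInf hne fun M hM => hM.1, ?_, hne⟩
  intro x v
  have hc : 0 ≤ ∑ β : A, N ^ exps β * ‖S.apply x β v‖ :=
    Finset.sum_nonneg fun β _ =>
      mul_nonneg (Real.rpow_nonneg hN0.le _) (norm_nonneg _)
  rw [hsum]
  refine le_csInf_mul hne hc fun M hM => ?_
  rw [← hsum]
  exact hM.2 x v

lemma ctyNorm_spec (S : PreSkeleton A Tb) (ord : ℝ)
    (V : ℝ × ℝ → (∀ γ : A, Tb γ) → ℝ)
    (hMc : ∃ Mc, 0 ≤ Mc ∧ S.FormContinuous ord V Mc) :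
    0 ≤ S.ctyNorm ord V ∧ S.FormContinuous ord V (S.ctyNorm ord V) := by
  obtain ⟨Mc, hMc0, hMcC⟩ := hMc
  have hne : {Mc | 0 ≤ Mc ∧ S.FormContinuous ord V Mc}.Nonempty := ⟨Mc, hMc0, hMcC⟩
  refine ⟨le_csInf hne fun M hM => hM.1, ?_⟩
  intro x y v hd
  have hc : 0 ≤ ∑ β : A, pdist y x ^ max (ord - (β : ℝ)) 0 * ‖S.apply x β v‖ :=
    Finset.sum_nonneg fun β _ =>
      mul_nonneg (Real.rpow_nonneg (pdist_nonneg _ _) _) (norm_nonneg _)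
  exact le_csInf_mul hne hc fun M hM => hM.2 x y v hd

lemma formBounded_cutForm (S : PreSkeleton A Tb)
    {V : ℝ × ℝ → (∀ γ : A, Tb γ) → ℝ} {Mb : A → ℝ}
    (h0 : ∀ β, 0 ≤ Mb β) (hB : S.FormBounded V Mb) (η : ℝ) :
    S.FormBounded (S.cutForm η V) Mb := by
  intro x v
  refine (hB x (S.cutVec x η v)).trans (Finset.sum_le_sum fun β _ => ?_)
  by_cases hβ : (β : ℝ) < η
  · rw [S.apply_cutVec_of_lt x η v β hβ]
  · rw [S.apply_cutVec_of_le x η v β (le_of_not_gt hβ)]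
    simp only [norm_zero, mul_zero]
    exact mul_nonneg (h0 β) (norm_nonneg _)

end PreSkeleton

/-- `m(η) = min{⟨β⟩ : β ∈ A, β ≥ η}`. -/
def minExpFrom (A : Finset ℝ) (exps : A → ℝ) (η : ℝ) : ℝ :=
  sInf {r | ∃ β : A, η ≤ (β : ℝ) ∧ r = exps β}

/-- **Reduction of modelled distributions.** -/
theorem reduction_of_modelled_distributions
    {A : Finset ℝ} {Tb : A → Type*}
    [∀ β, NormedAddCommGroup (Tb β)] [∀ β, NormedSpace ℝ (Tb β)]
    (S : PreSkeleton A Tb) (hS : S.IsSkeleton) (hA : A.Nonempty)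
    (N : ℝ) (hN0 : 0 < N) (hN1 : N ≤ 1)
    (exps : A → ℝ) (hexps : ∀ β, 0 ≤ exps β)
    (ord : ℝ) (V : ℝ × ℝ → (∀ γ : A, Tb γ) → ℝ) (hV : S.IsModelled ord V)
    (η : ℝ) (hη₁ : A.min' hA < η) (hη₂ : η ≤ A.max' hA) :
    S.IsModelled (min ord η) (S.cutForm η V) ∧
    S.bdNorm N exps (S.cutForm η V) ≤ S.bdNorm N exps V ∧
    S.ctyNorm (min ord η) (S.cutForm η V) ≤
      S.ctyNorm ord V +
        ((A.card - 1 : ℕ) : ℝ) * N ^ minExpFrom A exps η * S.skelNorm *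
          S.bdNorm N exps V ∧
    (∀ κ : ℝ, η < κ → ∀ (x : ℝ × ℝ) (v : ∀ γ : A, Tb γ),
      |S.cutForm κ V x v - S.cutForm η V x v| ≤
        S.bdNorm N exps V * ∑ β : A,
          (if η ≤ (β : ℝ) ∧ (β : ℝ) < κ
            then N ^ exps β * ‖S.apply x β v‖ else 0)) ∧
    (∀ (x : ℝ × ℝ) (v : ∀ γ : A, Tb γ),
      |V x v - S.cutForm η V x v| ≤
        S.bdNorm N exps V * ∑ β : A,
          (if η ≤ (β : ℝ) then N ^ exps β * ‖S.apply x β v‖ else 0)) := by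
  classical
  obtain ⟨hVl, hVc, hVb, hVfc⟩ := hV
  obtain ⟨hC0, hCb⟩ := S.skelNorm_spec hS
  obtain ⟨hM0, hMB, hSVne⟩ := S.bdNorm_spec N hN0 exps V hVb
  obtain ⟨hMc0, hMcC⟩ := S.ctyNorm_spec ord V hVfc
  set C := S.skelNorm with hCdef
  set M := S.bdNorm N exps V with hMdef
  set Mc := S.ctyNorm ord V with hMcdef
  set m := minExpFrom A exps η with hmdef
  set K : ℝ := ((A.card - 1 : ℕ) : ℝ) * N ^ m * C * M with hKdef
  -- basic facts about m
  have hbdd : BddBelow {r | ∃ β : A, η ≤ (β : ℝ) ∧ r = exps β} := by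
    refine BddBelow.mono ?_ (Set.finite_range exps).bddBelow
    rintro r ⟨β, _, rfl⟩
    exact ⟨β, rfl⟩
  have hNm : ∀ β : A, η ≤ (β : ℝ) → N ^ exps β ≤ N ^ m := fun β hβ =>
    Real.rpow_le_rpow_of_exponent_ge hN0 hN1 (csInf_le hbdd ⟨β, hβ, rfl⟩)
  have hNm0 : 0 ≤ N ^ m := (Real.rpow_pos_of_pos hN0 m).le
  have hK0 : 0 ≤ K :=
    mul_nonneg (mul_nonneg (mul_nonneg (Nat.cast_nonneg _) hNm0) hC0) hM0
  -- counting β ≥ η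
  have hcard : ∀ c : ℝ, 0 ≤ c →
      (∑ β : A, if η ≤ (β : ℝ) then c else 0) ≤ ((A.card - 1 : ℕ) : ℝ) * c := by
    intro c hc
    have h1 : (∑ β : A, if η ≤ (β : ℝ) then c else 0)
        = ((Finset.univ.filter fun β : A => η ≤ (β : ℝ)).card : ℝ) * c := by
      rw [← Finset.sum_filter, Finset.sum_const, nsmul_eq_mul]
    rw [h1]
    refine mul_le_mul_of_nonneg_right (Nat.cast_le.mpr ?_) hc
    have hsub : (Finset.univ.filter fun β : A => η ≤ (β : ℝ))
        ⊆ Finset.univ.erase ⟨A.min' hA, A.min'_mem hA⟩ := by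
      intro β hβ
      rw [Finset.mem_filter] at hβ
      rw [Finset.mem_erase]
      refine ⟨fun hcon => ?_, Finset.mem_univ _⟩
      rw [hcon] at hβ
      have : η ≤ A.min' hA := hβ.2
      linarith
    calc (Finset.univ.filter fun β : A => η ≤ (β : ℝ)).card
        ≤ (Finset.univ.erase (⟨A.min' hA, A.min'_mem hA⟩ : A)).card :=
          Finset.card_le_card hsub
      _ = Fintype.card A - 1 := by
          rw [Finset.card_erase_of_mem (Finset.mem_univ _), Finset.card_univ]
      _ = A.card - 1 := by rw [Fintype.card_coe]
  -- form boundedness of the reduction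
  have hFB : S.FormBounded (S.cutForm η V) (fun β => M * N ^ exps β) :=
    S.formBounded_cutForm
      (fun β => mul_nonneg hM0 (Real.rpow_nonneg hN0.le _)) hMB η
  -- form continuity of the reduction
  have hFC : S.FormContinuous (min ord η) (S.cutForm η V) (Mc + K) := by
    intro x y v hd
    have hd0 : 0 ≤ pdist y x := pdist_nonneg y x
    set Sg := ∑ β : A, pdist y x ^ max (min ord η - (β : ℝ)) 0 * ‖S.apply x β v‖
      with hSgdef
    have hSg0 : 0 ≤ Sg := Finset.sum_nonneg fun β _ =>
      mul_nonneg (Real.rpow_nonneg hd0 _) (norm_nonneg _)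
    have hsplit : S.cutForm η V y v - S.cutForm η V x v
        = (V y (S.cutVec x η v) - V x (S.cutVec x η v))
          + (V y (S.cutVec y η v) - V y (S.cutVec x η v)) := by
      show V y (S.cutVec y η v) - V x (S.cutVec x η v) = _
      ring
    have hA1 : |V y (S.cutVec x η v) - V x (S.cutVec x η v)| ≤ Mc * Sg := by
      refine (hMcC x y (S.cutVec x η v) hd).trans ?_
      refine mul_le_mul_of_nonneg_left ?_ hMc0
      refine Finset.sum_le_sum fun β _ => ?_
      by_cases hβ : (β : ℝ) < η
      · rw [S.apply_cutVec_of_lt x η v β hβ]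
        refine mul_le_mul_of_nonneg_right ?_ (norm_nonneg _)
        refine rpow_anti hd0 hd (le_max_right _ _) ?_
        exact max_le_max (sub_le_sub_right (min_le_left _ _) _) le_rfl
      · rw [S.apply_cutVec_of_le x η v β (le_of_not_gt hβ)]
        simp only [norm_zero, mul_zero]
        exact mul_nonneg (Real.rpow_nonneg hd0 _) (norm_nonneg _)
    have hB1 : |V y (S.cutVec y η v) - V y (S.cutVec x η v)| ≤ K * Sg := by
      rw [← (hVl y).map_sub]
      refine (hMB y _).trans ?_
      calc ∑ β : A, (M * N ^ exps β) * ‖S.apply y β (S.cutVec y η v - S.cutVec x η v)‖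
          ≤ ∑ β : A, (if η ≤ (β : ℝ) then N ^ m * C * M * Sg else 0) := by
            refine Finset.sum_le_sum fun β _ => ?_
            by_cases hβ : η ≤ (β : ℝ)
            · rw [if_pos hβ]
              have e1 : S.apply y β (S.cutVec y η v - S.cutVec x η v)
                  = - S.apply y β (S.cutVec x η v) := by
                rw [S.apply_sub, S.apply_cutVec_of_le y η v β hβ, zero_sub]
              rw [e1, norm_neg]
              have e2 := S.apply_cutVec_remainder hCb x y hd η v β hβ
              have e3 : (∑ γ : A, if (γ : ℝ) < (β : ℝ) ∧ (γ : ℝ) < η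
                  then pdist y x ^ ((β : ℝ) - (γ : ℝ)) * ‖S.apply x γ v‖ else 0)
                  ≤ Sg := by
                refine Finset.sum_le_sum fun γ _ => ?_
                by_cases hγ : (γ : ℝ) < (β : ℝ) ∧ (γ : ℝ) < η
                · rw [if_pos hγ]
                  refine mul_le_mul_of_nonneg_right ?_ (norm_nonneg _)
                  refine rpow_anti hd0 hd (le_max_right _ _) (max_le ?_ ?_)
                  · have h5 : min ord η ≤ η := min_le_right _ _
                    linarith
                  · linarith [hγ.1]
                · rw [if_neg hγ]
                  exact mul_nonneg (Real.rpow_nonneg hd0 _) (norm_nonneg _)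
              calc (M * N ^ exps β) * ‖S.apply y β (S.cutVec x η v)‖
                  ≤ (M * N ^ exps β) * (C * Sg) := by
                    refine mul_le_mul_of_nonneg_left ?_
                      (mul_nonneg hM0 (Real.rpow_nonneg hN0.le _))
                    exact e2.trans (mul_le_mul_of_nonneg_left e3 hC0)
                _ ≤ (M * N ^ m) * (C * Sg) :=
                    mul_le_mul_of_nonneg_right
                      (mul_le_mul_of_nonneg_left (hNm β hβ) hM0)
                      (mul_nonneg hC0 hSg0)
                _ = N ^ m * C * M * Sg := by ring
            · rw [if_neg hβ]
              have e1 : S.apply y β (S.cutVec y η v - S.cutVec x η v) = 0 := by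
                rw [S.apply_sub, S.apply_cutVec_of_lt y η v β (lt_of_not_ge hβ),
                  S.apply_congr_pt x y η v β (lt_of_not_ge hβ), sub_self]
              rw [e1, norm_zero, mul_zero]
        _ ≤ ((A.card - 1 : ℕ) : ℝ) * (N ^ m * C * M * Sg) :=
            hcard _ (mul_nonneg (mul_nonneg (mul_nonneg hNm0 hC0) hM0) hSg0)
        _ = K * Sg := by rw [hKdef]; ring
    calc |S.cutForm η V y v - S.cutForm η V x v|
        ≤ |V y (S.cutVec x η v) - V x (S.cutVec x η v)|
          + |V y (S.cutVec y η v) - V y (S.cutVec x η v)| := by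
          rw [hsplit]; exact abs_add_le _ _
      _ ≤ Mc * Sg + K * Sg := add_le_add hA1 hB1
      _ = (Mc + K) * Sg := by ring
  -- continuity of the reduction
  have hcont : ∀ v, Continuous fun x => S.cutForm η V x v := by
    obtain ⟨Mb, hMb0, hMbB⟩ := hVb
    intro v
    rw [continuous_iff_continuousAt]
    intro x₀
    have hpd := pdist_tendsto x₀
    have hd1 : ∀ᶠ y in nhds x₀, pdist y x₀ ≤ 1 :=
      (hpd.eventually_lt_const (by norm_num : (0 : ℝ) < 1)).mono
        fun y hy => hy.le
    set w₀ := S.cutVec x₀ η v with hw₀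
    set g := fun y => ∑ β : A, (if η ≤ (β : ℝ) then
        Mb β * (C * ∑ γ : A, (if (γ : ℝ) < (β : ℝ) ∧ (γ : ℝ) < η
          then pdist y x₀ ^ ((β : ℝ) - (γ : ℝ)) * ‖S.apply x₀ γ v‖ else 0))
        else 0) with hgdef
    have hgt : Filter.Tendsto g (nhds x₀) (nhds 0) := by
      have h0 : Filter.Tendsto g (nhds x₀) (nhds (∑ _β : A, (0 : ℝ))) := by
        refine tendsto_finset_sum _ fun β _ => ?_
        by_cases hβ : η ≤ (β : ℝ)
        · simp only [if_pos hβ]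
          have hin : Filter.Tendsto (fun y => ∑ γ : A,
              (if (γ : ℝ) < (β : ℝ) ∧ (γ : ℝ) < η
                then pdist y x₀ ^ ((β : ℝ) - (γ : ℝ)) * ‖S.apply x₀ γ v‖ else 0))
              (nhds x₀) (nhds (∑ _γ : A, (0 : ℝ))) := by
            refine tendsto_finset_sum _ fun γ _ => ?_
            by_cases hγ : (γ : ℝ) < (β : ℝ) ∧ (γ : ℝ) < η
            · simp only [if_pos hγ]
              have he : (0 : ℝ) < (β : ℝ) - (γ : ℝ) := sub_pos.mpr hγ.1
              have hca : ContinuousAt (fun t : ℝ => t ^ ((β : ℝ) - (γ : ℝ))) 0 :=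
                Real.continuousAt_rpow_const 0 _ (Or.inr he.le)
              have hrp := (hca.tendsto.comp hpd).mul_const ‖S.apply x₀ γ v‖
              rw [Real.zero_rpow (ne_of_gt he), zero_mul] at hrp
              exact hrp
            · simp only [if_neg hγ]
              exact tendsto_const_nhds
          have := (hin.const_mul C).const_mul (Mb β)
          simpa using this
        · simp only [if_neg hβ]
          exact tendsto_const_nhds
      simpa using h0
    have hbound : ∀ᶠ y in nhds x₀,
        ‖V y (S.cutVec y η v) - V y w₀‖ ≤ g y := by
      filter_upwards [hd1] with y hy
      rw [Real.norm_eq_abs, ← (hVl y).map_sub]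
      refine (hMbB y _).trans ?_
      refine Finset.sum_le_sum fun β _ => ?_
      by_cases hβ : η ≤ (β : ℝ)
      · simp only [if_pos hβ]
        have e1 : S.apply y β (S.cutVec y η v - w₀)
            = - S.apply y β w₀ := by
          rw [S.apply_sub, S.apply_cutVec_of_le y η v β hβ, zero_sub]
        rw [e1, norm_neg]
        exact mul_le_mul_of_nonneg_left
          (S.apply_cutVec_remainder hCb x₀ y hy η v β hβ) (hMb0 β)
      · simp only [if_neg hβ]
        have e1 : S.apply y β (S.cutVec y η v - w₀) = 0 := by
          rw [S.apply_sub, S.apply_cutVec_of_lt y η v β (lt_of_not_ge hβ),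
            S.apply_congr_pt x₀ y η v β (lt_of_not_ge hβ), sub_self]
        rw [e1, norm_zero, mul_zero]
    have hkey : Filter.Tendsto (fun y => V y (S.cutVec y η v) - V y w₀)
        (nhds x₀) (nhds 0) := squeeze_zero_norm' hbound hgt
    have hfin := hkey.add ((hVc w₀).tendsto x₀)
    have heq : (fun y => (V y (S.cutVec y η v) - V y w₀) + V y w₀)
        = fun y => V y (S.cutVec y η v) := by
      funext y; ring
    rw [heq] at hfin
    show Filter.Tendsto (fun y => V y (S.cutVec y η v)) (nhds x₀)
      (nhds (V x₀ (S.cutVec x₀ η v)))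
    rw [← hw₀, ← zero_add (V x₀ w₀)]
    exact hfin
  refine ⟨⟨?_, hcont, ⟨fun β => M * N ^ exps β,
      fun β => mul_nonneg hM0 (Real.rpow_nonneg hN0.le _), hFB⟩,
      ⟨Mc + K, add_nonneg hMc0 hK0, hFC⟩⟩, ?_, ?_, ?_, ?_⟩
  · -- linearity
    intro x
    constructor
    · intro u w
      show V x (S.cutVec x η (u + w)) = _
      rw [S.cutVec_add, (hVl x).map_add]; rfl
    · intro c u
      show V x (S.cutVec x η (c • u)) = _
      rw [S.cutVec_smul, (hVl x).map_smul]; rfl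
  · -- bdNorm bound
    refine csInf_le_csInf ⟨0, fun M' hM' => hM'.1⟩ hSVne ?_
    rintro M' ⟨hM'0, hM'B⟩
    exact ⟨hM'0, S.formBounded_cutForm
      (fun β => mul_nonneg hM'0 (Real.rpow_nonneg hN0.le _)) hM'B η⟩
  · -- ctyNorm bound
    exact csInf_le ⟨0, fun Mc' hMc' => hMc'.1⟩ ⟨add_nonneg hMc0 hK0, hFC⟩
  · -- difference of two reductions
    intro κ hκ x v
    have e : S.cutForm κ V x v - S.cutForm η V x v
        = V x (S.cutVec x κ v - S.cutVec x η v) := by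
      rw [(hVl x).map_sub]; rfl
    rw [e]
    refine le_trans (hMB x _) (le_of_eq ?_)
    rw [Finset.mul_sum]
    refine Finset.sum_congr rfl fun β _ => ?_
    by_cases h1 : η ≤ (β : ℝ) ∧ (β : ℝ) < κ
    · rw [if_pos h1, S.apply_sub, S.apply_cutVec_of_lt x κ v β h1.2,
        S.apply_cutVec_of_le x η v β h1.1, sub_zero]
      ring
    · rw [if_neg h1]
      push_neg at h1
      by_cases h2 : η ≤ (β : ℝ)
      · rw [S.apply_sub, S.apply_cutVec_of_le x κ v β (h1 h2),
          S.apply_cutVec_of_le x η v β h2, sub_self, norm_zero, mul_zero,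
          mul_zero]
      · have h3 : (β : ℝ) < η := lt_of_not_ge h2
        rw [S.apply_sub, S.apply_cutVec_of_lt x κ v β (h3.trans hκ),
          S.apply_cutVec_of_lt x η v β h3, sub_self, norm_zero, mul_zero,
          mul_zero]
  · -- difference with the identity
    intro x v
    have e : V x v - S.cutForm η V x v = V x (v - S.cutVec x η v) := by
      rw [(hVl x).map_sub]; rfl
    rw [e]
    refine le_trans (hMB x _) (le_of_eq ?_)
    rw [Finset.mul_sum]
    refine Finset.sum_congr rfl fun β _ => ?_
    by_cases h1 : η ≤ (β : ℝ)
    · rw [if_pos h1, S.apply_sub, S.apply_cutVec_of_le x η v β h1, sub_zero]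
      ring
    · rw [if_neg h1, S.apply_sub,
        S.apply_cutVec_of_lt x η v β (lt_of_not_ge h1), sub_self, norm_zero,
        mul_zero, mul_zero]
end
end

section
/- Equivalence with Hairer-type continuity: Let (A,T) be an abstract space with skeleton Γ; by the triangular structure, Γ(x) is invertible in L(T,T) for every x, with Γ⁻¹ ∈ C⁰(ℝ²;L(T,T)). Let V ∈ C⁰(ℝ²;T*) satisfy form boundedness and set Ṽ(x) := Γ^{−*}(x)V(x), so that V(x).v = Ṽ(x).(Γ(x)v). Then for any M^c ≥ 0 and any ᾱ, the following are equivalent: (i) |(V(y)−V(x)).v| ≤ M^c Σ_{β∈A} d^{(ᾱ−β)∨0}(y,x)‖Γ_β(x)v‖_{T_β} for all v ∈ T and all x,y with d(y,x) ≤ 1; (ii) ‖(Γ^{−*}(x)Γ^{*}(y)Ṽ(y) − Ṽ(x))_β‖_{T_β*} ≤ M^c d^{(ᾱ−β)∨0}(y,x) for all β ∈ A and all x,y with d(y,x) ≤ 1, where (·)_β denotes the component in T_β* under T* = ⊕_{β∈A} T_β*. -/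
open scoped BigOperators
open MeasureTheory

noncomputable section

/-- **Equivalence with Hairer-type continuity.** -/
theorem form_continuity_equivalence
    {A : Finset ℝ} {Tb : A → Type*}
    [∀ β, NormedAddCommGroup (Tb β)] [∀ β, NormedSpace ℝ (Tb β)]
    (S : PreSkeleton A Tb) (hS : S.IsSkeleton)
    (V : ℝ × ℝ → (∀ γ : A, Tb γ) → ℝ)
    (hlin : ∀ x, IsLinearMap ℝ (V x)) (hcont : ∀ v, Continuous fun x => V x v)
    (hbd : ∃ Mb : A → ℝ, (∀ β, 0 ≤ Mb β) ∧ S.FormBounded V Mb)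
    -- the pointwise inverse `Γ⁻¹(x)` of the skeleton
    (Ginv : ℝ × ℝ → (∀ γ : A, Tb γ) → ∀ γ : A, Tb γ)
    (hGlin : ∀ x, IsLinearMap ℝ (Ginv x))
    (hGinv₁ : ∀ (x : ℝ × ℝ) (v : ∀ γ : A, Tb γ) (β : A),
      S.apply x β (Ginv x v) = v β)
    (hGinv₂ : ∀ (x : ℝ × ℝ) (v : ∀ γ : A, Tb γ),
      Ginv x (fun β => S.apply x β v) = v)
    -- `Ṽ` : the components of `Γ^{−*}(x) V(x)`
    (W : ℝ × ℝ → ∀ β : A, Tb β → ℝ)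
    (hWlin : ∀ x β, IsLinearMap ℝ (W x β))
    (hW : ∀ (x : ℝ × ℝ) (v : ∀ γ : A, Tb γ),
      V x v = ∑ β : A, W x β (S.apply x β v))
    (Mc : ℝ) (hMc : 0 ≤ Mc) (ord : ℝ) :
    S.FormContinuous ord V Mc ↔
      ∀ (β : A) (x y : ℝ × ℝ), pdist y x ≤ 1 → ∀ w : Tb β,
        |V y (Ginv x (Function.update 0 β w)) - W x β w| ≤
          Mc * pdist y x ^ max (ord - (β : ℝ)) 0 * ‖w‖ := by
  classical
  constructor
  · intro h β x y hxy w
    set v : ∀ γ : A, Tb γ := Ginv x (Function.update 0 β w) with hvdef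
    have hv : ∀ γ : A, S.apply x γ v = Function.update (0 : ∀ γ : A, Tb γ) β w γ :=
      fun γ => hGinv₁ x _ γ
    have hVx : V x v = W x β w := by
      rw [hW]
      rw [Finset.sum_eq_single β]
      · rw [hv, Function.update_self]
      · intro γ _ hγ
        rw [hv, Function.update_of_ne hγ]
        exact (hWlin x γ).map_zero
      · intro hβ; exact absurd (Finset.mem_univ β) hβ
    have hsum : ∑ γ : A, pdist y x ^ max (ord - (γ : ℝ)) 0 * ‖S.apply x γ v‖
        = pdist y x ^ max (ord - (β : ℝ)) 0 * ‖w‖ := by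
      rw [Finset.sum_eq_single β]
      · rw [hv, Function.update_self]
      · intro γ _ hγ
        rw [hv, Function.update_of_ne hγ]
        simp
      · intro hβ; exact absurd (Finset.mem_univ β) hβ
    have := h x y v hxy
    rw [hVx, hsum] at this
    calc |V y v - W x β w| ≤ Mc * (pdist y x ^ max (ord - (β : ℝ)) 0 * ‖w‖) := this
      _ = Mc * pdist y x ^ max (ord - (β : ℝ)) 0 * ‖w‖ := by ring
  · intro h x y v hxy
    set u : ∀ γ : A, Tb γ := fun γ => S.apply x γ v with hudef
    have hvu : v = Ginv x u := (hGinv₂ x v).symm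
    have hu : u = ∑ β : A, Function.update (0 : ∀ γ : A, Tb γ) β (u β) := by
      funext γ
      rw [Finset.sum_apply]
      rw [Finset.sum_eq_single γ]
      · rw [Function.update_self]
      · intro b _ hb
        exact Function.update_of_ne (Ne.symm hb) _ _
      · intro hγ; exact absurd (Finset.mem_univ γ) hγ
    have hVyv : V y v = ∑ β : A, V y (Ginv x (Function.update 0 β (u β))) := by
      conv_lhs => rw [hvu, hu]
      rw [show Ginv x (∑ β : A, Function.update (0 : ∀ γ : A, Tb γ) β (u β))
          = ∑ β : A, Ginv x (Function.update (0 : ∀ γ : A, Tb γ) β (u β)) from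
        map_sum (IsLinearMap.mk' (Ginv x) (hGlin x)) _ _]
      exact map_sum (IsLinearMap.mk' (V y) (hlin y)) _ _
    have hVxv : V x v = ∑ β : A, W x β (u β) := hW x v
    calc |V y v - V x v|
        = |∑ β : A, (V y (Ginv x (Function.update 0 β (u β))) - W x β (u β))| := by
          rw [Finset.sum_sub_distrib, ← hVyv, ← hVxv]
      _ ≤ ∑ β : A, |V y (Ginv x (Function.update 0 β (u β))) - W x β (u β)| :=
          Finset.abs_sum_le_sum_abs _ _
      _ ≤ ∑ β : A, Mc * pdist y x ^ max (ord - (β : ℝ)) 0 * ‖u β‖ :=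
          Finset.sum_le_sum fun β _ => h β x y hxy (u β)
      _ = Mc * ∑ β : A, pdist y x ^ max (ord - (β : ℝ)) 0 * ‖S.apply x β v‖ := by
          rw [Finset.mul_sum]; exact Finset.sum_congr rfl fun β _ => by rw [mul_assoc]
end
end
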